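/- The minus order ≤⁻ on bounded operators between Hilbert spaces (A ≤⁻ B iff c₀(closure R(A), closure R(B−A)) < 1 and c₀(closure R(A*), closure R(B*−A*)) < 1) is a partial order: it is reflexive, antisymmetric, and transitive. -/

import Mathlib

open ContinuousLinearMap Submodule

noncomputable def dixmierAngle {H : Type*} [NormedAddCommGroup H] [InnerProductSpace ℂ H]
    (M N : Submodule ℂ H) : ℝ :=
  sSup {r : ℝ | ∃ x ∈ M, ∃ y ∈ N, ‖x‖ = 1 ∧ ‖y‖ = 1 ∧ r = ‖(inner ℂ x y : ℂ)‖}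

section helpers

variable {H : Type*} [NormedAddCommGroup H] [InnerProductSpace ℂ H]

lemma dixmier_set_bdd (M N : Submodule ℂ H) :
    BddAbove {r : ℝ | ∃ x ∈ M, ∃ y ∈ N, ‖x‖ = 1 ∧ ‖y‖ = 1 ∧ r = ‖(inner ℂ x y : ℂ)‖} := by
  refine ⟨1, ?_⟩
  rintro r ⟨x, hx, y, hy, hx1, hy1, rfl⟩
  calc ‖(inner ℂ x y : ℂ)‖ ≤ ‖x‖ * ‖y‖ := norm_inner_le_norm x y
  _ = 1 := by rw [hx1, hy1]; ring

lemma dixmier_bound (M N : Submodule ℂ H) {x y : H} (hx : x ∈ M) (hy : y ∈ N) :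
    ‖(inner ℂ x y : ℂ)‖ ≤ max (dixmierAngle M N) 0 * (‖x‖ * ‖y‖) := by
  rcases eq_or_ne x 0 with rfl | hx0
  · simp
  rcases eq_or_ne y 0 with rfl | hy0
  · simp
  have hxn : (0:ℝ) < ‖x‖ := norm_pos_iff.mpr hx0
  have hyn : (0:ℝ) < ‖y‖ := norm_pos_iff.mpr hy0
  set x' : H := ((‖x‖ : ℂ))⁻¹ • x with hx'
  set y' : H := ((‖y‖ : ℂ))⁻¹ • y with hy'
  have hnx : ‖x'‖ = 1 := by
    rw [hx', norm_smul]
    simp [hxn.ne']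
  have hny : ‖y'‖ = 1 := by
    rw [hy', norm_smul]
    simp [hyn.ne']
  have hmem : ‖(inner ℂ x' y' : ℂ)‖ ∈
      {r : ℝ | ∃ x ∈ M, ∃ y ∈ N, ‖x‖ = 1 ∧ ‖y‖ = 1 ∧ r = ‖(inner ℂ x y : ℂ)‖} :=
    ⟨x', M.smul_mem _ hx, y', N.smul_mem _ hy, hnx, hny, rfl⟩
  have hle : ‖(inner ℂ x' y' : ℂ)‖ ≤ dixmierAngle M N := le_csSup (dixmier_set_bdd M N) hmem
  have hval : ‖(inner ℂ x' y' : ℂ)‖ = ‖x‖⁻¹ * (‖y‖⁻¹ * ‖(inner ℂ x y : ℂ)‖) := by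
    rw [hx', hy', inner_smul_left, inner_smul_right, norm_mul, norm_mul]
    simp [abs_of_pos, hxn, hyn]
  have h2 : ‖x‖⁻¹ * (‖y‖⁻¹ * ‖(inner ℂ x y : ℂ)‖) ≤ max (dixmierAngle M N) 0 := by
    rw [← hval]; exact hle.trans (le_max_left _ _)
  have := mul_le_mul_of_nonneg_left h2 (by positivity : (0:ℝ) ≤ ‖x‖ * ‖y‖)
  calc ‖(inner ℂ x y : ℂ)‖ = ‖x‖ * ‖y‖ * (‖x‖⁻¹ * (‖y‖⁻¹ * ‖(inner ℂ x y : ℂ)‖)) := by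
        field_simp
  _ ≤ ‖x‖ * ‖y‖ * max (dixmierAngle M N) 0 := this
  _ = max (dixmierAngle M N) 0 * (‖x‖ * ‖y‖) := by ring

lemma angle_lt_one_of_proj (M N : Submodule ℂ H) (E : H →L[ℂ] H)
    (hM : ∀ x ∈ M, E x = x) (hN : ∀ y ∈ N, E y = 0) : dixmierAngle M N < 1 := by
  set K : ℝ := ‖E‖ + 1 with hK
  have hK1 : (1:ℝ) ≤ K := by have := norm_nonneg E; linarith
  have hK0 : (0:ℝ) < K := by linarith
  have hbound : ∀ r ∈ {r : ℝ | ∃ x ∈ M, ∃ y ∈ N, ‖x‖ = 1 ∧ ‖y‖ = 1 ∧ r = ‖(inner ℂ x y : ℂ)‖},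
      r ≤ 1 - 1 / (2 * K ^ 2) := by
    rintro r ⟨x, hx, y, hy, hx1, hy1, rfl⟩
    rcases eq_or_ne (inner ℂ x y : ℂ) 0 with hz | hz
    · rw [hz, norm_zero]
      have : 1 / (2 * K ^ 2) ≤ 1 / 2 := by
        apply div_le_div_of_nonneg_left (by norm_num) (by norm_num)
        nlinarith
      linarith
    · set z : ℂ := inner ℂ x y with hzdef
      set β : ℂ := (‖z‖ : ℂ) / z with hβ
      have hzn : (0:ℝ) < ‖z‖ := norm_pos_iff.mpr hz
      have hβnorm : ‖β‖ = 1 := by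
        rw [hβ, norm_div, Complex.norm_real, Real.norm_eq_abs, abs_of_pos hzn]
        exact div_self hzn.ne'
      set y2 : H := β • y with hy2
      have hy2N : y2 ∈ N := N.smul_mem _ hy
      have hy2n : ‖y2‖ = 1 := by rw [hy2, norm_smul, hβnorm, hy1]; ring
      have hinner : (inner ℂ x y2 : ℂ) = (‖z‖ : ℂ) := by
        rw [hy2, inner_smul_right, ← hzdef, hβ, div_mul_cancel₀ _ hz]
      have hdiff : ‖x - y2‖ ^ 2 = 2 - 2 * ‖z‖ := by
        have := norm_sub_sq (𝕜 := ℂ) x y2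
        rw [hinner] at this
        rw [hx1, hy2n] at this
        rw [this]
        have : RCLike.re ((‖z‖ : ℝ) : ℂ) = ‖z‖ := by simp
        rw [this]; ring
      have hEd : E (x - y2) = x := by
        rw [map_sub, hM x hx, hy2, map_smul, hN y hy, smul_zero, sub_zero]
      have h1 : (1:ℝ) ≤ K * ‖x - y2‖ := by
        have := E.le_opNorm (x - y2)
        rw [hEd, hx1] at this
        have h2 : ‖E‖ * ‖x - y2‖ ≤ K * ‖x - y2‖ :=
          mul_le_mul_of_nonneg_right (by linarith) (norm_nonneg _)
        linarith
      have hsq : 1 ≤ K ^ 2 * (2 - 2 * ‖z‖) := by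
        have h3 : (1:ℝ) ≤ (K * ‖x - y2‖) ^ 2 := by nlinarith
        rw [mul_pow] at h3
        rw [← hdiff]; nlinarith [sq_nonneg ‖x - y2‖]
      have hK2 : (0:ℝ) < K ^ 2 := by positivity
      have hfin : 1 / (2 * K ^ 2) ≤ 1 - ‖z‖ := by
        rw [div_le_iff₀ (by positivity)]
        nlinarith
      linarith
  have hle : dixmierAngle M N ≤ 1 - 1 / (2 * K ^ 2) := by
    apply Real.sSup_le hbound
    have : 1 / (2 * K ^ 2) ≤ 1 / 2 := by
      apply div_le_div_of_nonneg_left (by norm_num) (by norm_num)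
      nlinarith
    linarith
  have : 0 < 1 / (2 * K ^ 2) := by positivity
  linarith


private lemma sqrt_aux {a b c1 : ℝ} (hc : 0 < c1) (h : c1 * a ^ 2 ≤ b ^ 2) (ha : 0 ≤ a)
    (hb : 0 ≤ b) :
    a ≤ Real.sqrt c1⁻¹ * b := by
  have h' : a ^ 2 ≤ c1⁻¹ * b ^ 2 := by
    rw [inv_mul_eq_div, le_div_iff₀ hc]; nlinarith
  calc a = Real.sqrt (a ^ 2) := by rw [Real.sqrt_sq ha]
  _ ≤ Real.sqrt (c1⁻¹ * b ^ 2) := Real.sqrt_le_sqrt h'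
  _ = Real.sqrt c1⁻¹ * b := by
      rw [Real.sqrt_mul (by positivity), Real.sqrt_sq hb]

set_option maxHeartbeats 1000000 in
lemma exists_proj_of_angle_lt_one [CompleteSpace H] (M N : Submodule ℂ H)
    (hM : IsClosed (M : Set H)) (hN : IsClosed (N : Set H))
    (h : dixmierAngle M N < 1) :
    ∃ E : H →L[ℂ] H, (∀ x ∈ M, E x = x) ∧ (∀ y ∈ N, E y = 0) := by
  set c : ℝ := max (dixmierAngle M N) 0 with hc
  have hc1 : c < 1 := max_lt h one_pos
  have hc0 : 0 ≤ c := le_max_right _ _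
  have h1c : (0:ℝ) < 1 - c := by linarith
  have key : ∀ x ∈ M, ∀ y ∈ N, ‖(inner ℂ x y : ℂ)‖ ≤ c * (‖x‖ * ‖y‖) :=
    fun x hx y hy => dixmier_bound M N hx hy
  have lower : ∀ m ∈ M, ∀ n ∈ N, (1 - c) * (‖m‖ ^ 2 + ‖n‖ ^ 2) ≤ ‖m + n‖ ^ 2 := by
    intro m hm n hn
    have h1 := key m hm n hn
    have h2 : |RCLike.re (inner ℂ m n : ℂ)| ≤ ‖(inner ℂ m n : ℂ)‖ := RCLike.abs_re_le_norm _
    have h3 := norm_add_sq (𝕜 := ℂ) m n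
    have h4 := (abs_le.mp (h2.trans h1)).1
    nlinarith [sq_nonneg (‖m‖ - ‖n‖), norm_nonneg m, norm_nonneg n]
  have hMN : ∀ x, x ∈ M → x ∈ N → x = 0 := by
    intro x hxM hxN
    have h1 := key x hxM x hxN
    have h2 : ‖x‖ ^ 2 = RCLike.re (inner ℂ x x : ℂ) := (@inner_self_eq_norm_sq ℂ _ _ _ _ x).symm
    have h3 : RCLike.re (inner ℂ x x : ℂ) ≤ ‖(inner ℂ x x : ℂ)‖ := RCLike.re_le_norm _
    have hp : ‖x‖ * ‖x‖ ≤ 0 := by nlinarith [mul_self_nonneg ‖x‖]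
    have h6 : ‖x‖ * ‖x‖ = 0 := le_antisymm hp (mul_self_nonneg _)
    exact norm_eq_zero.mp (mul_self_eq_zero.mp h6)
  haveI : CompleteSpace M := hM.completeSpace_coe
  haveI : CompleteSpace N := hN.completeSpace_coe
  -- M + N is closed
  set f : (M × N) →L[ℂ] H := (M.subtypeL).coprod (N.subtypeL) with hf
  set K : NNReal := ⟨Real.sqrt (1 - c)⁻¹, Real.sqrt_nonneg _⟩ with hKdef
  have hfb : ∀ p : M × N, ‖p‖ ≤ (K : ℝ) * ‖f p‖ := by
    intro p
    have hfp : f p = (p.1 : H) + (p.2 : H) := rfl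
    have hp : ‖p‖ = max ‖(p.1 : H)‖ ‖(p.2 : H)‖ := rfl
    have hsq : (1 - c) * ‖p‖ ^ 2 ≤ ‖f p‖ ^ 2 := by
      have hl := lower p.1 p.1.2 p.2 p.2.2
      rw [hfp]
      have : ‖p‖ ^ 2 ≤ ‖(p.1 : H)‖ ^ 2 + ‖(p.2 : H)‖ ^ 2 := by
        rw [hp]
        rcases max_cases ‖(p.1 : H)‖ ‖(p.2 : H)‖ with ⟨he, _⟩ | ⟨he, _⟩ <;> rw [he] <;>
          nlinarith [sq_nonneg ‖(p.1 : H)‖, sq_nonneg ‖(p.2 : H)‖, norm_nonneg p.1, norm_nonneg p.2]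
      nlinarith
    exact sqrt_aux h1c hsq (norm_nonneg p) (norm_nonneg _)
  have hanti : AntilipschitzWith K f := f.antilipschitz_of_bound hfb
  have hclosed_range : IsClosed (Set.range f) := hanti.isClosed_range f.uniformContinuous
  have hrange : Set.range f = ((M ⊔ N : Submodule ℂ H) : Set H) := by
    ext z
    constructor
    · rintro ⟨p, rfl⟩
      exact add_mem_sup p.1.2 p.2.2
    · intro hz
      rcases mem_sup.mp hz with ⟨m, hm, n, hn, rfl⟩
      exact ⟨(⟨m, hm⟩, ⟨n, hn⟩), rfl⟩
  have hsupclosed : IsClosed ((M ⊔ N : Submodule ℂ H) : Set H) := hrange ▸ hclosed_range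
  set W : Submodule ℂ H := (M ⊔ N)ᗮ with hW
  have hdisj : Disjoint M (N ⊔ W) := by
    rw [Submodule.disjoint_def]
    intro x hxM hxNW
    rcases mem_sup.mp hxNW with ⟨n, hn, w, hw, hx⟩
    have hwMN : w ∈ M ⊔ N := by
      have : w = x - n := by rw [← hx]; abel
      rw [this]
      exact sub_mem (le_sup_left (α := Submodule ℂ H) hxM) (le_sup_right (α := Submodule ℂ H) hn)
    have hw0 : w = 0 := by
      have := Submodule.inner_right_of_mem_orthogonal hwMN hw
      exact inner_self_eq_zero.mp this
    have hxn : x = n := by rw [← hx, hw0, add_zero]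
    exact hMN x hxM (hxn ▸ hn)
  haveI : CompleteSpace ↥(M ⊔ N : Submodule ℂ H) := hsupclosed.completeSpace_coe
  have hcodis : Codisjoint M (N ⊔ W) := by
    rw [codisjoint_iff, ← sup_assoc]
    exact Submodule.sup_orthogonal_of_hasOrthogonalProjection
  have compl : IsCompl M (N ⊔ W) := ⟨hdisj, hcodis⟩
  set E₀ : H →ₗ[ℂ] M := M.projectionOnto (N ⊔ W) compl with hE₀
  set Elin : H →ₗ[ℂ] H := M.subtype ∘ₗ E₀ with hElin
  have hprojM : ∀ x ∈ M, Elin x = x := by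
    intro x hx
    have := Submodule.linearProjOfIsCompl_apply_left compl ⟨x, hx⟩
    simp only [hElin, LinearMap.comp_apply, hE₀]
    rw [this]
    rfl
  have hprojN : ∀ q ∈ N ⊔ W, Elin q = 0 := by
    intro q hq
    have := Submodule.projectionOnto_apply_of_mem_right compl hq
    simp only [hElin, LinearMap.comp_apply, hE₀]
    rw [this]; rfl
  have hbound : ∀ z, ‖Elin z‖ ≤ Real.sqrt (1 - c)⁻¹ * ‖z‖ := by
    intro z
    have hzmem : z ∈ M ⊔ (N ⊔ W) := by rw [codisjoint_iff.mp hcodis]; trivial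
    rcases mem_sup.mp hzmem with ⟨m, hm, q, hq, hz⟩
    rcases mem_sup.mp hq with ⟨n, hn, w, hw, hqe⟩
    have hEz : Elin z = m := by
      rw [← hz, map_add, hprojM m hm, hprojN q hq, add_zero]
    rw [hEz]
    apply sqrt_aux h1c _ (norm_nonneg m) (norm_nonneg z)
    have hzd : z = (m + n) + w := by rw [← hz, ← hqe]; abel
    have horth : RCLike.re (inner ℂ (m + n) w : ℂ) = 0 := by
      rw [Submodule.inner_right_of_mem_orthogonal (add_mem_sup hm hn) hw]
      simp
    have hzn : ‖z‖ ^ 2 = ‖m + n‖ ^ 2 + ‖w‖ ^ 2 := by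
      rw [hzd, norm_add_sq (𝕜 := ℂ), horth]; ring
    have hl := lower m hm n hn
    nlinarith [sq_nonneg ‖w‖, sq_nonneg ‖n‖]
  refine ⟨Elin.mkContinuous (Real.sqrt (1 - c)⁻¹) hbound, ?_, ?_⟩
  · intro x hx
    simpa using hprojM x hx
  · intro y hy
    simpa using hprojN y (le_sup_left (α := Submodule ℂ H) hy)

end helpers

variable {H₁ H₂ : Type*} [NormedAddCommGroup H₁] [InnerProductSpace ℂ H₁] [CompleteSpace H₁]
  [NormedAddCommGroup H₂] [InnerProductSpace ℂ H₂] [CompleteSpace H₂]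

/-- The minus order. -/
def minusLE (A B : H₁ →L[ℂ] H₂) : Prop :=
  dixmierAngle (LinearMap.range (A : H₁ →ₗ[ℂ] H₂)).topologicalClosure
      (LinearMap.range ((B - A : H₁ →L[ℂ] H₂) : H₁ →ₗ[ℂ] H₂)).topologicalClosure < 1 ∧
  dixmierAngle (LinearMap.range (adjoint A : H₂ →ₗ[ℂ] H₁)).topologicalClosure
      (LinearMap.range ((adjoint B - adjoint A : H₂ →L[ℂ] H₁) : H₂ →ₗ[ℂ] H₁)).topologicalClosure < 1


lemma aux_iff {G K : Type*} [NormedAddCommGroup G] [InnerProductSpace ℂ G]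
    [NormedAddCommGroup K] [InnerProductSpace ℂ K] [CompleteSpace K]
    (A B : G →L[ℂ] K) :
    dixmierAngle (LinearMap.range (A : G →ₗ[ℂ] K)).topologicalClosure
      (LinearMap.range ((B - A : G →L[ℂ] K) : G →ₗ[ℂ] K)).topologicalClosure < 1 ↔
    ∃ E : K →L[ℂ] K, E.comp A = A ∧ E.comp B = A := by
  constructor
  · intro h1
    obtain ⟨E, hEM, hEN⟩ := exists_proj_of_angle_lt_one _ _
      (LinearMap.range (A : G →ₗ[ℂ] K)).isClosed_topologicalClosure
      (LinearMap.range ((B - A : G →L[ℂ] K) : G →ₗ[ℂ] K)).isClosed_topologicalClosure h1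
    have hA : ∀ x, E (A x) = A x := fun x =>
      hEM (A x) (Submodule.le_topologicalClosure _ (LinearMap.mem_range_self _ x))
    refine ⟨E, by ext x; exact hA x, ?_⟩
    ext x
    have hD : E ((B - A) x) = 0 :=
      hEN _ (Submodule.le_topologicalClosure _ (LinearMap.mem_range_self _ x))
    have hD' : E (B x - A x) = 0 := hD
    simp only [ContinuousLinearMap.comp_apply]
    have : E (B x) = E (B x - A x) + E (A x) := by rw [← map_add]; congr 1; abel
    rw [this, hD', hA, zero_add]
  · rintro ⟨E, hEA, hEB⟩
    apply angle_lt_one_of_proj _ _ E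
    · intro x hx
      have hclosed : IsClosed ((LinearMap.eqLocus (E : K →ₗ[ℂ] K) LinearMap.id : Submodule ℂ K) : Set K) :=
        isClosed_eq E.continuous continuous_id
      have hle : (LinearMap.range (A : G →ₗ[ℂ] K)).topologicalClosure ≤
          LinearMap.eqLocus (E : K →ₗ[ℂ] K) LinearMap.id := by
        refine Submodule.topologicalClosure_minimal _ ?_ hclosed
        rintro _ ⟨u, rfl⟩
        exact ContinuousLinearMap.ext_iff.mp hEA u
      exact hle hx
    · intro y hy
      have hclosed : IsClosed ((LinearMap.eqLocus (E : K →ₗ[ℂ] K) (0 : K →ₗ[ℂ] K) : Submodule ℂ K) : Set K) :=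
        isClosed_eq E.continuous continuous_const
      have hle : (LinearMap.range ((B - A : G →L[ℂ] K) : G →ₗ[ℂ] K)).topologicalClosure ≤
          LinearMap.eqLocus (E : K →ₗ[ℂ] K) (0 : K →ₗ[ℂ] K) := by
        refine Submodule.topologicalClosure_minimal _ ?_ hclosed
        rintro _ ⟨u, rfl⟩
        show E ((B - A) u) = 0
        have : (B - A) u = B u - A u := rfl
        have h1 : E (A u) = A u := ContinuousLinearMap.ext_iff.mp hEA u
        have h2 : E (B u) = A u := ContinuousLinearMap.ext_iff.mp hEB u
        rw [this, map_sub, h1, h2, sub_self]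
      exact hle hy

lemma flip_side {G K : Type*} [NormedAddCommGroup G] [InnerProductSpace ℂ G] [CompleteSpace G]
    [NormedAddCommGroup K] [InnerProductSpace ℂ K] [CompleteSpace K]
    {A B : G →L[ℂ] K} {F : G →L[ℂ] G}
    (h1 : F.comp (adjoint A) = adjoint A) (h2 : F.comp (adjoint B) = adjoint A) :
    A.comp (adjoint F) = A ∧ B.comp (adjoint F) = A := by
  constructor
  · have := congrArg adjoint h1
    rwa [adjoint_comp, adjoint_adjoint] at this
  · have := congrArg adjoint h2
    rwa [adjoint_comp, adjoint_adjoint, adjoint_adjoint] at this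

theorem minus_order_is_partial_order :
    (∀ A : H₁ →L[ℂ] H₂, minusLE A A) ∧
    (∀ A B : H₁ →L[ℂ] H₂, minusLE A B → minusLE B A → A = B) ∧
    (∀ A B C : H₁ →L[ℂ] H₂, minusLE A B → minusLE B C → minusLE A C) := by
  refine ⟨?_, ?_, ?_⟩
  · intro A
    exact ⟨(aux_iff A A).mpr ⟨ContinuousLinearMap.id ℂ H₂, A.id_comp, A.id_comp⟩,
      (aux_iff (adjoint A) (adjoint A)).mpr
        ⟨ContinuousLinearMap.id ℂ H₁, (adjoint A).id_comp, (adjoint A).id_comp⟩⟩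
  · intro A B hAB hBA
    obtain ⟨E1, hE1A, hE1B⟩ := (aux_iff A B).mp hAB.1
    obtain ⟨F1, hF1A, hF1B⟩ := (aux_iff (adjoint A) (adjoint B)).mp hAB.2
    obtain ⟨E2, hE2B, hE2A⟩ := (aux_iff B A).mp hBA.1
    have hBF : B.comp (adjoint F1) = A := (flip_side hF1A hF1B).2
    have h1 : E2.comp A = A := by
      rw [← hBF, ← ContinuousLinearMap.comp_assoc, hE2B]
    rw [← hE2A, h1]
  · intro A B C hAB hBC
    obtain ⟨E1, hE1A, hE1B⟩ := (aux_iff A B).mp hAB.1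
    obtain ⟨F1, hF1A, hF1B⟩ := (aux_iff (adjoint A) (adjoint B)).mp hAB.2
    obtain ⟨E2, hE2B, hE2C⟩ := (aux_iff B C).mp hBC.1
    obtain ⟨F2, hF2B, hF2C⟩ := (aux_iff (adjoint B) (adjoint C)).mp hBC.2
    have hBF : B.comp (adjoint F1) = A := (flip_side hF1A hF1B).2
    have hE2A : E2.comp A = A := by
      rw [← hBF, ← ContinuousLinearMap.comp_assoc, hE2B]
    have hBE : (adjoint B).comp (adjoint E1) = adjoint A := by
      have := congrArg adjoint hE1B
      rwa [adjoint_comp] at this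
    have hF2A : F2.comp (adjoint A) = adjoint A := by
      rw [← hBE, ← ContinuousLinearMap.comp_assoc, hF2B]
    constructor
    · apply (aux_iff A C).mpr
      refine ⟨E1.comp E2, ?_, ?_⟩
      · rw [ContinuousLinearMap.comp_assoc, hE2A, hE1A]
      · rw [ContinuousLinearMap.comp_assoc, hE2C, hE1B]
    · apply (aux_iff (adjoint A) (adjoint C)).mpr
      refine ⟨F1.comp F2, ?_, ?_⟩
      · rw [ContinuousLinearMap.comp_assoc, hF2A, hF1A]
      · rw [ContinuousLinearMap.comp_assoc, hF2C, hF1B]
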